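/- arXiv:1610.04825 — 3 statements merged into one kernel-verified Lean document; each statement's English description precedes it below -/
import Mathlib

section
/- Let x_k(t) = C_m(t)·sin(φ+t) − S_m(t)·cos(φ+t) and y_k(t) = C_m(t)·cos(φ+t) + S_m(t)·sin(φ+t) for k = 2m, m ≥ 1. Then x_k'(t) = (-1)^m (t^{2m}/(2m)!)·cos(φ+t) and y_k'(t) = (-1)^{m+1} (t^{2m}/(2m)!)·sin(φ+t). -/
open Real

/-- Partial sum of the cosine Taylor series: first `n+1` terms. -/
noncomputable def Cser (n : ℕ) (t : ℝ) : ℝ :=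
  ∑ i ∈ Finset.range (n + 1), (-1 : ℝ) ^ i * t ^ (2 * i) / (2 * i).factorial

/-- Partial sum of the sine Taylor series: first `n` terms. -/
noncomputable def Sser (n : ℕ) (t : ℝ) : ℝ :=
  ∑ i ∈ Finset.range n, (-1 : ℝ) ^ i * t ^ (2 * i + 1) / (2 * i + 1).factorial

lemma hasDerivAt_Cser (n : ℕ) (t : ℝ) : HasDerivAt (Cser n) (-(Sser n t)) t := by
  have h : HasDerivAt (Cser n)
      (∑ i ∈ Finset.range (n + 1),
        (-1 : ℝ) ^ i * ((2 * i : ℕ) * t ^ (2 * i - 1)) / (2 * i).factorial) t := by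
    unfold Cser
    apply HasDerivAt.fun_sum
    intro i _
    have := (hasDerivAt_pow (2 * i) t).const_mul ((-1 : ℝ) ^ i)
    have h2 := this.div_const ((2 * i).factorial : ℝ)
    convert h2 using 1
  convert h using 1
  rw [Finset.sum_range_succ']
  simp only [Nat.mul_zero, Nat.cast_zero, zero_mul, mul_zero, zero_div, add_zero]
  unfold Sser
  rw [← Finset.sum_neg_distrib]
  apply Finset.sum_congr rfl
  intro i _
  have h1 : 2 * (i + 1) = 2 * i + 1 + 1 := by ring
  rw [h1]
  have hf : ((2 * i + 1).factorial : ℝ) ≠ 0 := Nat.cast_ne_zero.mpr (Nat.factorial_ne_zero _)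
  have key : ((2 * i + 1 + 1).factorial : ℝ) = (2 * i + 1 + 1) * (2 * i + 1).factorial := by
    rw [Nat.factorial_succ]; push_cast; ring
  simp only [Nat.add_sub_cancel, pow_succ, key]
  field_simp
  push_cast; ring

lemma hasDerivAt_Sser (n : ℕ) (hn : 1 ≤ n) (t : ℝ) :
    HasDerivAt (Sser n) (Cser n t - (-1 : ℝ) ^ n * (t ^ (2 * n) / (2 * n).factorial)) t := by
  have h : HasDerivAt (Sser n)
      (∑ i ∈ Finset.range n,
        (-1 : ℝ) ^ i * ((2 * i + 1 : ℕ) * t ^ (2 * i + 1 - 1)) / (2 * i + 1).factorial) t := by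
    unfold Sser
    apply HasDerivAt.fun_sum
    intro i _
    have := ((hasDerivAt_pow (2 * i + 1) t).const_mul ((-1 : ℝ) ^ i)).div_const
      ((2 * i + 1).factorial : ℝ)
    convert this using 1
  convert h using 1
  obtain ⟨k, rfl⟩ := Nat.exists_eq_add_of_le hn
  have hC : Cser (1 + k) t - (-1 : ℝ) ^ (1 + k) * (t ^ (2 * (1 + k)) / (2 * (1 + k)).factorial)
      = ∑ i ∈ Finset.range (1 + k), (-1 : ℝ) ^ i * t ^ (2 * i) / (2 * i).factorial := by
    unfold Cser
    rw [Finset.sum_range_succ]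
    ring
  rw [hC]
  apply Finset.sum_congr rfl
  intro i _
  have h2 : (2 * i + 1).factorial = (2 * i + 1) * (2 * i).factorial := Nat.factorial_succ _
  rw [h2]
  have hf : ((2 * i).factorial : ℝ) ≠ 0 := Nat.cast_ne_zero.mpr (Nat.factorial_ne_zero _)
  simp only [Nat.add_sub_cancel]
  push_cast
  field_simp

theorem deriv_even_involute (φ : ℝ) (m : ℕ) (hm : 1 ≤ m) (t : ℝ) :
    deriv (fun t => Cser m t * Real.sin (φ + t) - Sser m t * Real.cos (φ + t)) t
      = (-1 : ℝ) ^ m * (t ^ (2 * m) / (2 * m).factorial) * Real.cos (φ + t) ∧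
    deriv (fun t => Cser m t * Real.cos (φ + t) + Sser m t * Real.sin (φ + t)) t
      = (-1 : ℝ) ^ (m + 1) * (t ^ (2 * m) / (2 * m).factorial) * Real.sin (φ + t) := by
  have hC := hasDerivAt_Cser m t
  have hS := hasDerivAt_Sser m hm t
  have hsin : HasDerivAt (fun t => Real.sin (φ + t)) (Real.cos (φ + t)) t := by
    simpa [Function.comp_def] using (Real.hasDerivAt_sin (φ + t)).comp t ((hasDerivAt_id t).const_add φ)
  have hcos : HasDerivAt (fun t => Real.cos (φ + t)) (-Real.sin (φ + t)) t := by
    simpa [Function.comp_def] using (Real.hasDerivAt_cos (φ + t)).comp t ((hasDerivAt_id t).const_add φ)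
  constructor
  · have := ((hC.mul hsin).sub (hS.mul hcos)).deriv
    exact this.trans (by ring)
  · have := ((hC.mul hcos).add (hS.mul hsin)).deriv
    exact this.trans (by ring)
end

section
/- For the curve x(t) = C_m(t)·sin(φ+t) − S_m(t)·cos(φ+t), y(t) = C_m(t)·cos(φ+t) + S_m(t)·sin(φ+t) on [0,t] with t > 0, the arc length ∫_0^t √(x'(u)^2 + y'(u)^2) du equals t^{2m+1}/(2m+1)!. -/
open Real

lemma hasDerivAt_Cser_s5 (m : ℕ) (v : ℝ) :
    HasDerivAt (fun v => Cser m v) (-(Sser m v)) v := by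
  have h : HasDerivAt (fun v => Cser m v)
      (∑ i ∈ Finset.range (m + 1),
        (-1 : ℝ) ^ i * ((2 * i : ℕ) * v ^ (2 * i - 1)) / (2 * i).factorial) v := by
    unfold Cser
    apply HasDerivAt.fun_sum
    intro i _
    exact ((hasDerivAt_pow (2 * i) v).const_mul ((-1 : ℝ) ^ i)).div_const _
  convert h using 1
  rw [Finset.sum_range_succ']
  simp only [Nat.mul_zero, Nat.cast_zero, zero_mul, mul_zero, pow_zero, one_mul, zero_div,
    add_zero]
  rw [Sser, ← Finset.sum_neg_distrib]
  apply Finset.sum_congr rfl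
  intro i _
  have h1 : 2 * (i + 1) = (2 * i + 1) + 1 := by ring
  have h2 : 2 * (i + 1) - 1 = 2 * i + 1 := by omega
  rw [h2, h1, Nat.factorial_succ (2 * i + 1), pow_succ]
  have hf : ((2 * i + 1).factorial : ℝ) ≠ 0 := by positivity
  push_cast
  field_simp
  ring

lemma hasDerivAt_Sser_s5 (m : ℕ) (v : ℝ) :
    HasDerivAt (fun v => Sser m v)
      (∑ i ∈ Finset.range m, (-1 : ℝ) ^ i * v ^ (2 * i) / (2 * i).factorial) v := by
  have h : HasDerivAt (fun v => Sser m v)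
      (∑ i ∈ Finset.range m,
        (-1 : ℝ) ^ i * ((2 * i + 1 : ℕ) * v ^ (2 * i + 1 - 1)) / (2 * i + 1).factorial) v := by
    unfold Sser
    apply HasDerivAt.fun_sum
    intro i _
    exact ((hasDerivAt_pow (2 * i + 1) v).const_mul ((-1 : ℝ) ^ i)).div_const _
  convert h using 1
  apply Finset.sum_congr rfl
  intro i _
  have h2 : 2 * i + 1 - 1 = 2 * i := by omega
  rw [h2, Nat.factorial_succ]
  have hf : ((2 * i).factorial : ℝ) ≠ 0 := by positivity
  push_cast
  field_simp

theorem arclength_even_involute (φ : ℝ) (m : ℕ) (hm : 1 ≤ m) (t : ℝ) (ht : 0 < t) :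
    (∫ u in (0:ℝ)..t, Real.sqrt
        ((deriv (fun v => Cser m v * Real.sin (φ + v) - Sser m v * Real.cos (φ + v)) u) ^ 2 +
         (deriv (fun v => Cser m v * Real.cos (φ + v) + Sser m v * Real.sin (φ + v)) u) ^ 2))
      = t ^ (2 * m + 1) / (2 * m + 1).factorial := by
  obtain ⟨n, rfl⟩ : ∃ n, m = n + 1 := ⟨m - 1, (Nat.succ_pred_eq_of_pos hm).symm⟩
  have hS : ∀ u : ℝ, HasDerivAt (fun v => Sser (n + 1) v) (Cser n u) u := by
    intro u
    exact hasDerivAt_Sser_s5 (n + 1) u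
  set D : ℝ → ℝ := fun u => Cser (n + 1) u - Cser n u with hD
  have hDval : ∀ u : ℝ, D u = (-1 : ℝ) ^ (n + 1) * u ^ (2 * (n + 1)) / (2 * (n + 1)).factorial := by
    intro u
    simp only [hD, Cser, Finset.sum_range_succ]
    ring
  have hsin : ∀ u : ℝ, HasDerivAt (fun v => Real.sin (φ + v)) (Real.cos (φ + u)) u := by
    intro u
    have h := (Real.hasDerivAt_sin (φ + u)).comp u ((hasDerivAt_id u).const_add φ)
    simpa [Function.comp_def] using h
  have hcos : ∀ u : ℝ, HasDerivAt (fun v => Real.cos (φ + v)) (-Real.sin (φ + u)) u := by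
    intro u
    have h := (Real.hasDerivAt_cos (φ + u)).comp u ((hasDerivAt_id u).const_add φ)
    simpa [Function.comp_def] using h
  have hx : ∀ u : ℝ,
      deriv (fun v => Cser (n+1) v * Real.sin (φ + v) - Sser (n+1) v * Real.cos (φ + v)) u
        = D u * Real.cos (φ + u) := by
    intro u
    have h := (((hasDerivAt_Cser_s5 (n+1) u).mul (hsin u)).sub ((hS u).mul (hcos u)))
    have h2 : -Sser (n+1) u * Real.sin (φ + u) + Cser (n+1) u * Real.cos (φ + u) -
        (Cser n u * Real.cos (φ + u) + Sser (n+1) u * -Real.sin (φ + u))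
        = D u * Real.cos (φ + u) := by
      simp only [hD]; ring
    rw [← h2]
    exact h.deriv
  have hy : ∀ u : ℝ,
      deriv (fun v => Cser (n+1) v * Real.cos (φ + v) + Sser (n+1) v * Real.sin (φ + v)) u
        = -(D u) * Real.sin (φ + u) := by
    intro u
    have h := (((hasDerivAt_Cser_s5 (n+1) u).mul (hcos u)).add ((hS u).mul (hsin u)))
    have h2 : -Sser (n+1) u * Real.cos (φ + u) + Cser (n+1) u * -Real.sin (φ + u) +
        (Cser n u * Real.sin (φ + u) + Sser (n+1) u * Real.cos (φ + u))
        = -(D u) * Real.sin (φ + u) := by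
      simp only [hD]; ring
    rw [← h2]
    exact h.deriv
  have key : ∀ u : ℝ,
      Real.sqrt
        ((deriv (fun v => Cser (n+1) v * Real.sin (φ + v) - Sser (n+1) v * Real.cos (φ + v)) u) ^ 2 +
         (deriv (fun v => Cser (n+1) v * Real.cos (φ + v) + Sser (n+1) v * Real.sin (φ + v)) u) ^ 2)
        = u ^ (2 * (n + 1)) / (2 * (n + 1)).factorial := by
    intro u
    rw [hx u, hy u]
    have hsq : (D u * Real.cos (φ + u)) ^ 2 + (-(D u) * Real.sin (φ + u)) ^ 2 = (D u) ^ 2 := by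
      have := Real.sin_sq_add_cos_sq (φ + u)
      nlinarith [this]
    rw [hsq, Real.sqrt_sq_eq_abs, hDval u]
    rw [abs_div, abs_mul, abs_pow, abs_neg, abs_one, one_pow, one_mul]
    have h1 : |u ^ (2 * (n + 1))| = u ^ (2 * (n + 1)) := by
      apply abs_of_nonneg
      exact even_iff_two_dvd.mpr ⟨n + 1, by ring⟩ |>.pow_nonneg u
    have h2 : |((2 * (n + 1)).factorial : ℝ)| = ((2 * (n + 1)).factorial : ℝ) := by
      apply abs_of_nonneg; positivity
    rw [h1, h2]
  simp_rw [key]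
  rw [intervalIntegral.integral_div, integral_pow]
  have hfac : ((2 * (n + 1) + 1).factorial : ℝ)
      = (2 * (n + 1) + 1) * ((2 * (n + 1)).factorial : ℝ) := by
    rw [Nat.factorial_succ]; push_cast; ring
  rw [hfac]
  have h1 : ((2 * (n + 1)).factorial : ℝ) ≠ 0 := by positivity
  have h2 : ((2 * (n + 1) : ℕ) : ℝ) + 1 ≠ 0 := by positivity
  field_simp
  rw [zero_pow (by omega)]; push_cast; ring
end

section
/- The involute of the curve x(t) = sin(φ+t) − t·cos(φ+t), y(t) = cos(φ+t) + t·sin(φ+t) (the first involute of the unit circle arc), with unwinding from t = 0, is given by x(t) = sin(φ+t) − t·cos(φ+t) − (t²/2)·sin(φ+t) and y(t) = cos(φ+t) + t·sin(φ+t) − (t²/2)·cos(φ+t), for t > 0. -/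
open Real

private lemma deriv_f (φ u : ℝ) :
    deriv (fun v => Real.sin (φ + v) - v * Real.cos (φ + v)) u = u * Real.sin (φ + u) := by
  have h1 : HasDerivAt (fun v => Real.sin (φ + v) - v * Real.cos (φ + v))
      (Real.cos (φ + u) * (0 + 1) - (1 * Real.cos (φ + u) + u * (-Real.sin (φ + u) * (0 + 1)))) u := by
    exact ((((hasDerivAt_const u φ).add (hasDerivAt_id u)).sin)).sub
      ((hasDerivAt_id u).mul (((hasDerivAt_const u φ).add (hasDerivAt_id u)).cos))
  have := h1.deriv
  rw [this]; ring

private lemma deriv_g (φ u : ℝ) :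
    deriv (fun v => Real.cos (φ + v) + v * Real.sin (φ + v)) u = u * Real.cos (φ + u) := by
  have h1 : HasDerivAt (fun v => Real.cos (φ + v) + v * Real.sin (φ + v))
      (-Real.sin (φ + u) * (0 + 1) + (1 * Real.sin (φ + u) + u * (Real.cos (φ + u) * (0 + 1)))) u := by
    exact ((((hasDerivAt_const u φ).add (hasDerivAt_id u)).cos)).add
      ((hasDerivAt_id u).mul (((hasDerivAt_const u φ).add (hasDerivAt_id u)).sin))
  have := h1.deriv
  rw [this]; ring

private lemma sqrt_eq (φ u : ℝ) :
    Real.sqrt ((u * Real.sin (φ + u)) ^ 2 + (u * Real.cos (φ + u)) ^ 2) = |u| := by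
  have : (u * Real.sin (φ + u)) ^ 2 + (u * Real.cos (φ + u)) ^ 2 = u ^ 2 := by
    have := Real.sin_sq_add_cos_sq (φ + u); nlinarith [this]
  rw [this, Real.sqrt_sq_eq_abs]

theorem involute_of_first_involute (φ t : ℝ) (ht : 0 < t) :
    (letI f : ℝ → ℝ := fun v => Real.sin (φ + v) - v * Real.cos (φ + v)
     letI g : ℝ → ℝ := fun v => Real.cos (φ + v) + v * Real.sin (φ + v)
     letI s : ℝ → ℝ := fun v => ∫ u in (0:ℝ)..v, Real.sqrt ((deriv f u) ^ 2 + (deriv g u) ^ 2)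
     (f t - s t * deriv f t / Real.sqrt ((deriv f t) ^ 2 + (deriv g t) ^ 2)
        = Real.sin (φ + t) - t * Real.cos (φ + t) - (t ^ 2 / 2) * Real.sin (φ + t)) ∧
     (g t - s t * deriv g t / Real.sqrt ((deriv f t) ^ 2 + (deriv g t) ^ 2)
        = Real.cos (φ + t) + t * Real.sin (φ + t) - (t ^ 2 / 2) * Real.cos (φ + t))) := by
  simp only [deriv_f, deriv_g, sqrt_eq]
  have hs : (∫ u in (0:ℝ)..t, |u|) = t ^ 2 / 2 := by
    rw [intervalIntegral.integral_congr (g := fun u => u)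
      (fun u hu => by
        rw [Set.uIcc_of_le ht.le] at hu
        exact abs_of_nonneg hu.1)]
    simp [integral_id]
  rw [hs, abs_of_pos ht]
  constructor <;> field_simp <;> ring
end
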